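/- For every $n \in \mathbb{N}$ and every $k, t \in \mathbb{N}_+$ with $k \ge 2$, the non-partite extremal number satisfies $\mathrm{ex}(n, K^{(k)}_{t,\ldots,t}) \le \frac{2 n^{k - 1/t^{k-1}}}{(k-1)!}$; and for $k=1$, $\mathrm{ex}(n, K^{(1)}_t) \le t - 1$. -/

import Mathlib

/-- A `k`-uniform hypergraph on `[n]` contains a (non-induced) copy of the complete
`k`-partite hypergraph with `t` vertices per part. -/
def HasNonpartiteCopy (n k t : ℕ) (E : Finset (Finset (Fin n))) : Prop :=
  ∃ v : Fin k → Fin t → Fin n,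
    Function.Injective (fun p : Fin k × Fin t => v p.1 p.2) ∧
    ∀ f : Fin k → Fin t, (Finset.univ.image fun i => v i (f i)) ∈ E

lemma desc_ge (d t : ℕ) : (d + 1 - t) ^ t ≤ d.descFactorial t := by
  induction t with
  | zero => simp
  | succ t ih =>
    have hb : d + 1 - (t+1) = d - t := by omega
    calc (d + 1 - (t+1)) ^ (t+1) = (d - t) * (d - t) ^ t := by
          rw [hb, pow_succ']
    _ ≤ (d - t) * (d + 1 - t) ^ t :=
          Nat.mul_le_mul_left _ (Nat.pow_le_pow_left (by omega) t)
    _ ≤ (d - t) * d.descFactorial t := Nat.mul_le_mul_left _ ih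
    _ = d.descFactorial (t+1) := (Nat.descFactorial_succ d t).symm

lemma key_one (n t : ℕ) (ht : 1 ≤ t) (E : Finset (Finset (Fin n)))
    (hU : ∀ e ∈ E, e.card = 1) (hNC : ¬ HasNonpartiteCopy n 1 t E) :
    E.card ≤ t - 1 := by
  by_contra h
  push_neg at h
  have hts : t ≤ E.card := by omega
  apply hNC
  set V : Finset (Fin n) := E.biUnion id with hV
  have hsing : ∀ e ∈ E, ∃ x, e = {x} := fun e he => Finset.card_eq_one.1 (hU e he)
  have hVmem : ∀ x ∈ V, ({x} : Finset (Fin n)) ∈ E := by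
    intro x hx
    rw [hV, Finset.mem_biUnion] at hx
    obtain ⟨e, he, hxe⟩ := hx
    obtain ⟨y, rfl⟩ := hsing e he
    simp only [id] at hxe
    rw [Finset.mem_singleton] at hxe
    subst hxe; exact he
  have hVcard : t ≤ V.card := by
    have : V.card = ∑ e ∈ E, (id e).card := by
      rw [hV]
      apply Finset.card_biUnion
      intro e he f hf hef
      obtain ⟨x, rfl⟩ := hsing e he
      obtain ⟨y, rfl⟩ := hsing f hf
      simp only [Function.onFun, id]
      rw [Finset.disjoint_singleton]
      intro hxy; exact hef (by rw [hxy])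
    rw [this]
    calc t ≤ E.card := hts
    _ = ∑ e ∈ E, 1 := by simp
    _ ≤ ∑ e ∈ E, (id e).card := by
        apply Finset.sum_le_sum
        intro e he; simp [hU e he]
  obtain ⟨V', hV'sub, hV'card⟩ := Finset.exists_subset_card_eq hVcard
  set o := V'.orderIsoOfFin hV'card
  refine ⟨fun _ j => (o j : Fin n), ?_, ?_⟩
  · rintro ⟨i1, j1⟩ ⟨i2, j2⟩ hatom
    simp only at hatom
    have : j1 = j2 := by
      have := o.injective (Subtype.ext hatom)
      exact this
    have hi : i1 = i2 := Subsingleton.elim _ _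
    simp [this, hi]
  · intro f
    have : (Finset.univ.image fun i : Fin 1 => (o (f i) : Fin n)) = {(o (f 0) : Fin n)} := by
      ext x
      simp only [Finset.mem_image, Finset.mem_univ, true_and, Finset.mem_singleton]
      constructor
      · rintro ⟨i, hi⟩
        have hi0 : i = 0 := Subsingleton.elim _ _
        rw [← hi, hi0]
      · intro hx; exact ⟨0, hx.symm⟩
    rw [this]
    exact hVmem _ (hV'sub (o (f 0)).2)

lemma no_copy_link (n k' t : ℕ) (ht : 1 ≤ t) (E : Finset (Finset (Fin n)))
    (hNC : ¬ HasNonpartiteCopy n (k'+1) t E) (w : Fin t → Fin n) (hw : Function.Injective w)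
    (H : Finset (Finset (Fin n)))
    (hH : ∀ S ∈ H, ∀ j, w j ∉ S ∧ insert (w j) S ∈ E) :
    ¬ HasNonpartiteCopy n k' t H := by
  rintro ⟨v, hvinj, hvedge⟩
  apply hNC
  have havoid : ∀ i j j', v i j ≠ w j' := by
    intro i j j' heq
    set f : Fin k' → Fin t := fun i' => if i' = i then j else ⟨0, ht⟩ with hf
    have hedge := hvedge f
    have hmem : v i j ∈ Finset.univ.image fun i' => v i' (f i') := by
      apply Finset.mem_image.2
      exact ⟨i, Finset.mem_univ i, by simp [hf]⟩
    have := (hH _ hedge j').1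
    rw [heq] at hmem
    exact this hmem
  set v' : Fin (k'+1) → Fin t → Fin n := Fin.cons w v with hv'
  have hv0 : v' 0 = w := rfl
  have hvs : ∀ i : Fin k', v' i.succ = v i := fun _ => rfl
  refine ⟨v', ?_, ?_⟩
  · rintro ⟨i1, j1⟩ ⟨i2, j2⟩ hatom
    simp only at hatom
    rcases Fin.eq_zero_or_eq_succ i1 with h1 | ⟨i1', rfl⟩ <;>
      rcases Fin.eq_zero_or_eq_succ i2 with h2 | ⟨i2', rfl⟩
    · subst h1; subst h2
      rw [hv0] at hatom
      simp [hw hatom]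
    · subst h1
      rw [hv0, hvs] at hatom
      exact absurd hatom.symm (havoid _ _ _)
    · subst h2
      rw [hv0, hvs] at hatom
      exact absurd hatom (havoid _ _ _)
    · rw [hvs, hvs] at hatom
      have := hvinj (a₁ := (i1', j1)) (a₂ := (i2', j2)) hatom
      simp only [Prod.mk.injEq] at this ⊢
      exact ⟨congrArg Fin.succ this.1, this.2⟩
  · intro f
    have himg : (Finset.univ.image fun i => v' i (f i)) =
        insert (w (f 0)) (Finset.univ.image fun i : Fin k' => v i (f i.succ)) := by
      ext x
      simp only [Finset.mem_image, Finset.mem_insert, Finset.mem_univ, true_and]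
      rw [Fin.exists_fin_succ]
      simp [hv0, hvs, eq_comm]
    rw [himg]
    exact (hH _ (hvedge fun i => f i.succ) (f 0)).2

noncomputable def bnd (n t k : ℕ) : ℝ :=
  if k ≤ 1 then (t : ℝ) - 1
  else 2 * (n : ℝ) ^ ((k : ℝ) - 1 / (t : ℝ) ^ (k - 1)) / (Nat.factorial (k - 1) : ℝ)

lemma bnd_nonneg (n t k : ℕ) (ht : 1 ≤ t) : 0 ≤ bnd n t k := by
  unfold bnd
  split
  · have : (1:ℝ) ≤ t := by exact_mod_cast ht
    linarith
  · positivity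

set_option maxHeartbeats 1000000 in
lemma key (n t : ℕ) (ht : 1 ≤ t) :
    ∀ k, 1 ≤ k → ∀ E : Finset (Finset (Fin n)),
      (∀ e ∈ E, e.card = k) → ¬ HasNonpartiteCopy n k t E → (E.card : ℝ) ≤ bnd n t k := by
  intro k hk
  induction k, hk using Nat.le_induction with
  | base =>
    intro E hU hNC
    have h1 := key_one n t ht E hU hNC
    rw [bnd, if_pos le_rfl]
    calc (E.card : ℝ) ≤ ((t-1 : ℕ) : ℝ) := by exact_mod_cast h1
    _ = (t:ℝ) - 1 := by rw [Nat.cast_sub ht]; simp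
  | succ k' hk' IH =>
    intro E hU hNC
    classical
    by_cases hnk : n < k' + 1
    · have hE0 : E = ∅ := by
        rw [Finset.eq_empty_iff_forall_notMem]
        intro e he
        have h1 : e.card = k' + 1 := hU e he
        have h2 : e.card ≤ n := by simpa using Finset.card_le_univ e
        omega
      rw [hE0]
      simpa using bnd_nonneg n t (k'+1) ht
    push_neg at hnk
    set P := Finset.powersetCard k' (Finset.univ : Finset (Fin n)) with hP
    set Vv : Finset (Fin n) → Finset (Fin n) :=
      fun S => Finset.univ.filter (fun v => v ∉ S ∧ insert v S ∈ E) with hVv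
    set dS : Finset (Fin n) → ℕ := fun S => (Vv S).card with hdS
    set WI := (Finset.univ : Finset (Fin t → Fin n)).filter Function.Injective with hWI
    set Hw : (Fin t → Fin n) → Finset (Finset (Fin n)) :=
      fun w => P.filter (fun S => ∀ j, w j ∉ S ∧ insert (w j) S ∈ E) with hHw
    have hPcard : P.card = n.choose k' := by
      rw [hP, Finset.card_powersetCard]; simp
    have hNpos : 0 < n.choose k' := Nat.choose_pos (by omega)
    -- Counting inequality 1
    have count1 : (k' + 1) * E.card ≤ ∑ S ∈ P, dS S := by
      have h1 : ∑ e ∈ E, e.card = (k' + 1) * E.card := by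
        rw [Finset.sum_congr rfl hU, Finset.sum_const, smul_eq_mul, mul_comm]
      have h2 : ∑ e ∈ E, e.card = (E.sigma fun e => e).card := (Finset.card_sigma _ _).symm
      have h3 : ∑ S ∈ P, dS S = (P.sigma Vv).card := (Finset.card_sigma _ _).symm
      rw [← h1, h2, h3]
      apply Finset.card_le_card_of_injOn
        (fun p : (_ : Finset (Fin n)) × Fin n => (⟨p.1.erase p.2, p.2⟩ : (_ : Finset (Fin n)) × Fin n))
      · rintro ⟨e, x⟩ hp
        rw [Finset.mem_coe, Finset.mem_sigma] at hp ⊢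
        obtain ⟨he, hx⟩ := hp
        refine ⟨?_, ?_⟩
        · rw [hP, Finset.mem_powersetCard]
          exact ⟨Finset.subset_univ _, by rw [Finset.card_erase_of_mem hx, hU e he]; omega⟩
        · rw [hVv]
          simp only [Finset.mem_filter]
          exact ⟨Finset.mem_univ _, Finset.notMem_erase _ _,
            by rw [Finset.insert_erase hx]; exact he⟩
      · rintro ⟨e1, x1⟩ h1' ⟨e2, x2⟩ h2' heq
        have hee : e1.erase x1 = e2.erase x2 := congrArg Sigma.fst heq
        have hxx : x1 = x2 := congrArg (fun s : (_ : Finset (Fin n)) × Fin n => s.2) heq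
        subst hxx
        have hm1 : e1 ∈ E ∧ x1 ∈ e1 := by simpa using h1'
        have hm2 : e2 ∈ E ∧ x1 ∈ e2 := by simpa using h2'
        have hee' : e1 = e2 := by
          rw [← Finset.insert_erase hm1.2, ← Finset.insert_erase hm2.2, hee]
        simp [hee']
    -- Counting inequality 2
    have count2a : ∀ S, (dS S).descFactorial t ≤
        (WI.filter (fun w => ∀ j, w j ∈ Vv S)).card := by
      intro S
      have hcemb : (dS S).descFactorial t = Fintype.card (Fin t ↪ {x // x ∈ Vv S}) := by
        rw [Fintype.card_embedding_eq, Fintype.card_coe, Fintype.card_fin, hdS]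
      rw [hcemb, ← Fintype.card_coe (WI.filter (fun w => ∀ j, w j ∈ Vv S))]
      have hmem : ∀ e : Fin t ↪ {x // x ∈ Vv S},
          (fun j => (e j : Fin n)) ∈ WI.filter (fun w => ∀ j, w j ∈ Vv S) := by
        intro e
        rw [Finset.mem_filter, hWI, Finset.mem_filter]
        exact ⟨⟨Finset.mem_univ _, Subtype.coe_injective.comp e.injective⟩, fun j => (e j).2⟩
      apply Fintype.card_le_of_injective
        (fun e : Fin t ↪ {x // x ∈ Vv S} =>
          (⟨fun j => (e j : Fin n), hmem e⟩ : {w // w ∈ WI.filter (fun w => ∀ j, w j ∈ Vv S)}))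
      intro e1 e2 h
      have h' := congrArg Subtype.val h
      apply DFunLike.ext
      intro j
      apply Subtype.ext
      exact congrFun h' j
    have count2 : ∑ S ∈ P, (dS S).descFactorial t ≤ ∑ w ∈ WI, (Hw w).card := by
      calc ∑ S ∈ P, (dS S).descFactorial t
          ≤ ∑ S ∈ P, (WI.filter (fun w => ∀ j, w j ∈ Vv S)).card :=
            Finset.sum_le_sum fun S _ => count2a S
      _ = (P.sigma fun S => WI.filter (fun w => ∀ j, w j ∈ Vv S)).card :=
            (Finset.card_sigma _ _).symm
      _ ≤ (WI.sigma Hw).card := by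
            apply Finset.card_le_card_of_injOn
              (fun p : (_ : Finset (Fin n)) × (Fin t → Fin n) =>
                (⟨p.2, p.1⟩ : (_ : Fin t → Fin n) × Finset (Fin n)))
            · rintro ⟨S, w⟩ hp
              rw [Finset.mem_coe, Finset.mem_sigma, Finset.mem_filter] at hp
              obtain ⟨hSP, hwWI, hwV⟩ := hp
              rw [Finset.mem_coe, Finset.mem_sigma]
              refine ⟨hwWI, ?_⟩
              rw [hHw, Finset.mem_filter]
              refine ⟨hSP, fun j => ?_⟩
              have := hwV j
              rw [hVv] at this
              simp only [Finset.mem_filter] at this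
              exact this.2
            · rintro ⟨S1, w1⟩ h1' ⟨S2, w2⟩ h2' heq
              have hw : w1 = w2 := congrArg Sigma.fst heq
              have hS : S1 = S2 :=
                congrArg (fun s : (_ : Fin t → Fin n) × Finset (Fin n) => s.2) heq
              simp [hw, hS]
      _ = ∑ w ∈ WI, (Hw w).card := Finset.card_sigma _ _
    -- link bound from induction hypothesis
    have hHwb : ∀ w ∈ WI, ((Hw w).card : ℝ) ≤ bnd n t k' := by
      intro w hwW
      rw [hWI, Finset.mem_filter] at hwW
      apply IH
      · intro e he
        rw [hHw, Finset.mem_filter, hP, Finset.mem_powersetCard] at he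
        exact he.1.2
      · apply no_copy_link n k' t ht E hNC w hwW.2
        intro S hS
        rw [hHw, Finset.mem_filter] at hS
        exact hS.2
    have hWIcard : (WI.card : ℝ) ≤ ((n : ℝ)) ^ (t : ℕ) := by
      have h1 : WI.card ≤ (Finset.univ : Finset (Fin t → Fin n)).card := by
        rw [hWI]; exact Finset.card_filter_le _ _
      have h2 : (Finset.univ : Finset (Fin t → Fin n)).card = n ^ t := by
        rw [Finset.card_univ]; simp
      rw [h2] at h1
      exact_mod_cast h1

    -- Real setup
    set a : ℝ := (n : ℝ) with ha
    have hn1 : 1 ≤ n := by omega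
    have han : (1:ℝ) ≤ a := by rw [ha]; exact_mod_cast hn1
    have ha0 : (0:ℝ) < a := lt_of_lt_of_le one_pos han
    have htR : (1:ℝ) ≤ (t:ℝ) := by exact_mod_cast ht
    have ht0 : (0:ℝ) < (t:ℝ) := lt_of_lt_of_le one_pos htR
    set dd : ℝ := 1 / (t:ℝ) ^ k' with hdd
    have htp1 : (1:ℝ) ≤ (t:ℝ)^(k':ℕ) := by
      calc (1:ℝ) = 1^(k':ℕ) := (one_pow k').symm
      _ ≤ (t:ℝ)^(k':ℕ) := pow_le_pow_left₀ zero_le_one htR k'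
    have hdd0 : 0 < dd := by rw [hdd]; positivity
    have hdd1 : dd ≤ 1 := by
      rw [hdd, div_le_one (by positivity)]
      exact htp1
    set X : ℝ := a ^ ((k':ℝ) + 1 - dd) with hX
    have hX0 : 0 < X := Real.rpow_pos_of_pos ha0 _
    have hfk0 : (0:ℝ) < (Nat.factorial k' : ℝ) := by exact_mod_cast Nat.factorial_pos k'
    have hgoal_eq : bnd n t (k'+1) = 2 * X / (Nat.factorial k' : ℝ) := by
      rw [bnd, if_neg (by omega), hX, ha, hdd]
      norm_num [Nat.add_sub_cancel]
    have hNle : ((n.choose k' : ℕ) : ℝ) ≤ a ^ (k' : ℕ) / (Nat.factorial k' : ℝ) := by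
      rw [le_div_iff₀ hfk0]
      have h1 : n.choose k' * Nat.factorial k' ≤ n ^ k' := by
        rw [mul_comm, ← Nat.descFactorial_eq_factorial_mul_choose]
        exact Nat.descFactorial_le_pow n k'
      rw [ha]
      exact_mod_cast h1
    have hN0 : (0:ℝ) < ((n.choose k' : ℕ) : ℝ) := by exact_mod_cast hNpos
    set cS : Finset (Fin n) → ℝ := fun S => ((dS S + 1 - t : ℕ) : ℝ) with hcS
    clear_value cS
    have hcS0 : ∀ S ∈ P, 0 ≤ cS S := fun S _ => by simp only [hcS]; positivity
    have R2 : ((k':ℝ) + 1) * E.card - ((t:ℝ) - 1) * ((n.choose k' : ℕ):ℝ) ≤ ∑ S ∈ P, cS S := by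
      have e1 : ∀ S ∈ P, (dS S : ℝ) - ((t:ℝ) - 1) ≤ cS S := by
        intro S _
        simp only [hcS]
        rcases le_total t (dS S + 1) with h | h
        · rw [Nat.cast_sub h]
          push_cast
          linarith
        · have h0 : dS S + 1 - t = 0 := Nat.sub_eq_zero_of_le h
          have h7 : (dS S : ℝ) + 1 ≤ (t:ℝ) := by exact_mod_cast h
          rw [h0]
          norm_num
          linarith
      have e2 : ∑ S ∈ P, ((dS S : ℝ) - ((t:ℝ)-1)) ≤ ∑ S ∈ P, cS S := Finset.sum_le_sum e1
      have e3 : ∑ S ∈ P, ((dS S : ℝ) - ((t:ℝ)-1))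
          = (∑ S ∈ P, (dS S:ℝ)) - ((t:ℝ)-1) * ((n.choose k' : ℕ):ℝ) := by
        rw [Finset.sum_sub_distrib, Finset.sum_const, hPcard, nsmul_eq_mul]
        ring
      have e4 : ((k':ℝ)+1) * E.card ≤ ∑ S ∈ P, (dS S : ℝ) := by
        have h5 : (((k'+1) * E.card : ℕ):ℝ) ≤ ((∑ S ∈ P, dS S : ℕ):ℝ) := by
          exact_mod_cast count1
        push_cast at h5
        linarith
      rw [e3] at e2
      linarith
    have R3 : (∑ S ∈ P, cS S) ^ t ≤ ((n.choose k' : ℕ):ℝ) ^ (t-1) * ∑ S ∈ P, cS S ^ t := by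
      have t1 : t - 1 + 1 = t := by omega
      have h := pow_sum_div_card_le_sum_pow (s := P) (f := cS) hcS0 (t-1)
      rw [t1, hPcard] at h
      rw [div_le_iff₀ (pow_pos hN0 _)] at h
      calc (∑ S ∈ P, cS S)^t ≤ (∑ S ∈ P, cS S ^ t) * ((n.choose k':ℕ):ℝ)^(t-1) := h
      _ = _ := by ring
    have R4 : ∑ S ∈ P, cS S ^ t ≤ a ^ (t:ℕ) * bnd n t k' := by
      have s1 : ∀ S ∈ P, cS S ^ t ≤ (((dS S).descFactorial t : ℕ) : ℝ) := by
        intro S _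
        have hdg := desc_ge (dS S) t
        have hpc : cS S ^ t = (((dS S + 1 - t)^t : ℕ) : ℝ) := by
          simp only [hcS]
          exact (Nat.cast_pow _ _).symm
        rw [hpc]
        exact_mod_cast hdg
      calc ∑ S ∈ P, cS S ^ t
          ≤ ∑ S ∈ P, (((dS S).descFactorial t : ℕ) : ℝ) := Finset.sum_le_sum s1
      _ = ((∑ S ∈ P, (dS S).descFactorial t : ℕ):ℝ) := by rw [Nat.cast_sum]
      _ ≤ ((∑ w ∈ WI, (Hw w).card : ℕ):ℝ) := by exact_mod_cast count2
      _ = ∑ w ∈ WI, ((Hw w).card : ℝ) := by rw [Nat.cast_sum]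
      _ ≤ ∑ w ∈ WI, bnd n t k' := Finset.sum_le_sum hHwb
      _ = WI.card * bnd n t k' := by rw [Finset.sum_const, nsmul_eq_mul]
      _ ≤ a ^ (t:ℕ) * bnd n t k' :=
            mul_le_mul_of_nonneg_right hWIcard (bnd_nonneg n t k' ht)
    have hEchoose : (E.card : ℝ) * (Nat.factorial (k'+1) : ℝ) ≤ a ^ ((k'+1 : ℕ)) := by
      have h1 : E.card ≤ n.choose (k'+1) := by
        have hsub : E ⊆ Finset.powersetCard (k'+1) Finset.univ := by
          intro e he
          rw [Finset.mem_powersetCard]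
          exact ⟨Finset.subset_univ _, hU e he⟩
        calc E.card ≤ (Finset.powersetCard (k'+1) (Finset.univ : Finset (Fin n))).card :=
              Finset.card_le_card hsub
        _ = n.choose (k'+1) := by rw [Finset.card_powersetCard]; simp
      have h2 : E.card * Nat.factorial (k'+1) ≤ n ^ (k'+1) := by
        calc E.card * Nat.factorial (k'+1) ≤ n.choose (k'+1) * Nat.factorial (k'+1) :=
              Nat.mul_le_mul_right _ h1
        _ = n.descFactorial (k'+1) := by
              rw [mul_comm, ← Nat.descFactorial_eq_factorial_mul_choose]
        _ ≤ n ^ (k'+1) := Nat.descFactorial_le_pow n (k'+1)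
      rw [ha]
      exact_mod_cast h2
    have hsplitX : a ^ ((k'+1:ℕ)) = X * a ^ dd := by
      rw [hX, ← Real.rpow_natCast a (k'+1), ← Real.rpow_add ha0]
      congr 1
      push_cast
      ring
    rw [hgoal_eq]
    by_cases hcaseA : a ^ dd ≤ 2 * ((k':ℝ)+1)
    · have hfk10 : (0:ℝ) < (Nat.factorial (k'+1) : ℝ) := by exact_mod_cast Nat.factorial_pos _
      have hm : (E.card : ℝ) ≤ X * a ^ dd / (Nat.factorial (k'+1) : ℝ) := by
        rw [le_div_iff₀ hfk10, ← hsplitX]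
        exact hEchoose
      calc (E.card : ℝ) ≤ X * a^dd / (Nat.factorial (k'+1) : ℝ) := hm
      _ ≤ X * (2*((k':ℝ)+1)) / (Nat.factorial (k'+1) : ℝ) :=
            (div_le_div_iff_of_pos_right hfk10).2 (mul_le_mul_of_nonneg_left hcaseA hX0.le)
      _ = 2 * X / (Nat.factorial k' : ℝ) := by
            rw [Nat.factorial_succ]
            push_cast
            have hk'1 : ((k':ℝ)+1) ≠ 0 := by positivity
            field_simp
    · push_neg at hcaseA
      have hF : (t:ℝ) - 1 ≤ a ^ ((1:ℝ) - dd) := by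
        rcases eq_or_lt_of_le ht with h1 | h2
        · rw [← h1]
          norm_num
          exact Real.rpow_nonneg ha0.le _
        · have ht2 : (2:ℝ) ≤ (t:ℝ) := by exact_mod_cast h2
          have h4 : (4:ℝ) ≤ a ^ dd := by
            have hk1R : (1:ℝ) ≤ (k':ℝ) := by exact_mod_cast hk'
            linarith
          have htpt : (t:ℝ) ≤ (t:ℝ)^(k':ℕ) := by
            calc (t:ℝ) = (t:ℝ)^(1:ℕ) := (pow_one _).symm
            _ ≤ (t:ℝ)^(k':ℕ) := pow_le_pow_right₀ htR hk'
          have h1d : (1:ℝ)/dd = (t:ℝ)^(k':ℕ) := by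
            rw [hdd]; field_simp
          have hag : (4:ℝ) ^ ((t:ℝ)) ≤ a := by
            have s2 : (a ^ dd) ^ ((1:ℝ)/dd) = a := by
              rw [← Real.rpow_mul ha0.le, mul_one_div_cancel hdd0.ne', Real.rpow_one]
            have s3 : (4:ℝ) ^ ((t:ℝ)) ≤ (4:ℝ) ^ ((1:ℝ)/dd) := by
              apply Real.rpow_le_rpow_of_exponent_le (by norm_num)
              rw [h1d]; exact htpt
            have s1 : ((4:ℝ)) ^ ((1:ℝ)/dd) ≤ (a ^ dd) ^ ((1:ℝ)/dd) :=
              Real.rpow_le_rpow (by norm_num) h4 (by positivity)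
            calc (4:ℝ)^((t:ℝ)) ≤ (4:ℝ)^((1:ℝ)/dd) := s3
            _ ≤ (a^dd)^((1:ℝ)/dd) := s1
            _ = a := s2
          have hdhalf : dd ≤ 1/2 := by
            rw [hdd]
            rw [div_le_div_iff₀ (by positivity) (by norm_num)]
            have h8 : (2:ℝ) ≤ (t:ℝ)^(k':ℕ) := le_trans ht2 htpt
            linarith
          have c1 : ((4:ℝ)^((t:ℝ)))^((1:ℝ)-dd) ≤ a ^ ((1:ℝ)-dd) :=
            Real.rpow_le_rpow (by positivity) hag (by linarith)
          have c2 : ((4:ℝ)^((t:ℝ)))^((1:ℝ)-dd) = (4:ℝ)^((t:ℝ)*(1-dd)) := by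
            rw [← Real.rpow_mul (by norm_num)]
          have c3 : (4:ℝ)^((t:ℝ)/2) ≤ (4:ℝ)^((t:ℝ)*(1-dd)) := by
            apply Real.rpow_le_rpow_of_exponent_le (by norm_num)
            calc (t:ℝ)/2 = (t:ℝ)*(1/2) := by ring
            _ ≤ (t:ℝ)*(1-dd) := mul_le_mul_of_nonneg_left (by linarith) ht0.le
          have c4 : (4:ℝ)^((t:ℝ)/2) = (2:ℝ)^((t:ℝ)) := by
            have h42 : (4:ℝ) = (2:ℝ)^(((2:ℕ)):ℝ) := by
              rw [Real.rpow_natCast]; norm_num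
            rw [h42, ← Real.rpow_mul (by norm_num : (0:ℝ) ≤ 2)]
            congr 1
            push_cast
            ring
          have c5 : (t:ℝ) ≤ (2:ℝ)^((t:ℝ)) := by
            rw [Real.rpow_natCast (2:ℝ) t]
            exact_mod_cast (Nat.lt_two_pow_self (n := t)).le
          calc (t:ℝ) - 1 ≤ (t:ℝ) := by linarith
          _ ≤ (2:ℝ)^((t:ℝ)) := c5
          _ = (4:ℝ)^((t:ℝ)/2) := c4.symm
          _ ≤ (4:ℝ)^((t:ℝ)*(1-dd)) := c3
          _ = ((4:ℝ)^((t:ℝ)))^((1:ℝ)-dd) := c2.symm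
          _ ≤ a ^ ((1:ℝ)-dd) := c1
      have hstep : ((t:ℝ)-1) * ((n.choose k':ℕ):ℝ) ≤ X / (Nat.factorial k' : ℝ) := by
        have m1 : ((t:ℝ)-1) * ((n.choose k':ℕ):ℝ)
            ≤ a^((1:ℝ)-dd) * (a^(k':ℕ) / (Nat.factorial k' : ℝ)) :=
          mul_le_mul hF hNle (Nat.cast_nonneg _) (Real.rpow_nonneg ha0.le _)
        have m2 : a^((1:ℝ)-dd) * a^(k':ℕ) = X := by
          rw [hX, ← Real.rpow_natCast a k', ← Real.rpow_add ha0]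
          congr 1
          ring
        calc ((t:ℝ)-1) * ((n.choose k':ℕ):ℝ)
            ≤ a^((1:ℝ)-dd) * (a^(k':ℕ) / (Nat.factorial k' : ℝ)) := m1
        _ = (a^((1:ℝ)-dd) * a^(k':ℕ)) / (Nat.factorial k' : ℝ) := by ring
        _ = X / (Nat.factorial k' : ℝ) := by rw [m2]
      by_cases hB1 : ((k':ℝ)+1) * E.card ≤ ((t:ℝ)-1) * ((n.choose k':ℕ):ℝ)
      · have hk0R : (0:ℝ) ≤ (k':ℝ) := Nat.cast_nonneg _
        calc (E.card:ℝ) ≤ ((k':ℝ)+1) * E.card :=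
              le_mul_of_one_le_left (Nat.cast_nonneg _) (by linarith)
        _ ≤ ((t:ℝ)-1) * ((n.choose k':ℕ):ℝ) := hB1
        _ ≤ X / (Nat.factorial k' : ℝ) := hstep
        _ ≤ 2 * X / (Nat.factorial k' : ℝ) := by
              apply (div_le_div_iff_of_pos_right hfk0).2
              linarith
      · push_neg at hB1
        have hM0 : (0:ℝ) < ((k':ℝ)+1) * E.card - ((t:ℝ)-1) * ((n.choose k':ℕ):ℝ) := by
          linarith
        set M : ℝ := ((k':ℝ)+1) * E.card - ((t:ℝ)-1) * ((n.choose k':ℕ):ℝ) with hM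
        have hMle : M ≤ ∑ S ∈ P, cS S := by rw [hM]; linarith [R2]
        have hMt : M ^ t ≤ ((n.choose k':ℕ):ℝ)^(t-1) * (a^(t:ℕ)) * bnd n t k' := by
          calc M ^ t ≤ (∑ S ∈ P, cS S)^t := pow_le_pow_left₀ hM0.le hMle t
          _ ≤ ((n.choose k':ℕ):ℝ)^(t-1) * ∑ S ∈ P, cS S ^ t := R3
          _ ≤ ((n.choose k':ℕ):ℝ)^(t-1) * (a^(t:ℕ) * bnd n t k') :=
                mul_le_mul_of_nonneg_left R4 (pow_nonneg (Nat.cast_nonneg _) _)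
          _ = _ := by ring
        have hXt : X ^ (t:ℕ) = a ^ (((k':ℝ)+1-dd)*(t:ℝ)) := by
          rw [hX, ← Real.rpow_natCast (a ^ ((k':ℝ)+1-dd)) t, ← Real.rpow_mul ha0.le]
        have hat : a^(t:ℕ) = a^((t:ℝ)) := (Real.rpow_natCast a t).symm
        have hak : a^(k':ℕ) = a^((k':ℝ)) := (Real.rpow_natCast a k').symm
        have hat1 : (a^((k':ℝ)))^((t-1:ℕ)) = a^((k':ℝ)*((t:ℝ)-1)) := by
          rw [← Real.rpow_natCast (a^((k':ℝ))) (t-1), ← Real.rpow_mul ha0.le]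
          congr 1
          rw [Nat.cast_sub ht]
          push_cast
          ring
        have hNpow : ((n.choose k':ℕ):ℝ)^(t-1)
            ≤ (a^(k':ℕ)/(Nat.factorial k':ℝ))^(t-1) :=
          pow_le_pow_left₀ (Nat.cast_nonneg _) hNle _
        have hstar : ((n.choose k':ℕ):ℝ)^(t-1) * (a^(t:ℕ)) * bnd n t k'
            ≤ (2*(k':ℝ) * X / (Nat.factorial k' : ℝ))^t := by
          rcases eq_or_lt_of_le hk' with hk1 | hk2
          · -- k' = 1
            have hk1' : k' = 1 := hk1.symm
            have key1 : ((t:ℝ)-1) ≤ 2^(t:ℕ) := by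
              have h5 : (t:ℕ) ≤ 2^t := (Nat.lt_two_pow_self (n := t)).le
              have h6 : ((t:ℕ):ℝ) ≤ ((2^t : ℕ):ℝ) := by exact_mod_cast h5
              push_cast at h6
              linarith
            have hXt' : X ^ (t:ℕ) = a ^ ((2*t-1:ℕ)) := by
              have hexp1 : ((k':ℝ)+1-dd)*(t:ℝ) = ((2*t-1:ℕ):ℝ) := by
                have h7 : ((2*t-1:ℕ):ℝ) = 2*(t:ℝ)-1 := by
                  push_cast [Nat.cast_sub (show 1 ≤ 2*t by omega)]
                  ring
                have h8 : 1/(t:ℝ)*(t:ℝ) = 1 := one_div_mul_cancel ht0.ne'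
                rw [h7, hdd, hk1', pow_one]
                push_cast
                linear_combination -h8
              rw [hXt, hexp1, Real.rpow_natCast]
            have hmul : a^(t-1:ℕ) * a^(t:ℕ) = a^((2*t-1:ℕ)) := by
              rw [← pow_add]
              congr 1
              omega
            have hb1 : bnd n t 1 = (t:ℝ)-1 := by
              rw [bnd]
              norm_num
            have hch : ((n.choose 1:ℕ):ℝ) = a := by rw [Nat.choose_one_right, ha]
            rw [hk1']
            calc ((n.choose 1:ℕ):ℝ)^(t-1) * (a^(t:ℕ)) * bnd n t 1
                = a^(t-1:ℕ) * a^(t:ℕ) * ((t:ℝ)-1) := by rw [hb1, hch]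
            _ = a^((2*t-1:ℕ)) * ((t:ℝ)-1) := by rw [hmul]
            _ ≤ a^((2*t-1:ℕ)) * 2^(t:ℕ) := mul_le_mul_of_nonneg_left key1 (by positivity)
            _ = 2^(t:ℕ) * X^(t:ℕ) := by rw [hXt']; ring
            _ = (2*((1:ℕ):ℝ) * X / (Nat.factorial 1 : ℝ))^t := by
                norm_num [mul_pow, Nat.factorial_one]
          · -- 2 ≤ k'
            have hk2' : 2 ≤ k' := hk2
            set dd' : ℝ := 1/(t:ℝ)^(k'-1:ℕ) with hdd'
            have hbnd' : bnd n t k' = 2 * a ^ ((k':ℝ) - dd') / ((Nat.factorial (k'-1)):ℝ) := by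
              rw [bnd, if_neg (by omega), ha, hdd']
            have hddt : dd * (t:ℝ) = dd' := by
              rw [hdd, hdd']
              have hpow : (t:ℝ)^(k':ℕ) = (t:ℝ)^(k'-1:ℕ) * (t:ℝ) := by
                rw [← pow_succ]
                congr 1
                omega
              rw [hpow]
              field_simp
            have hf1 : (0:ℝ) < ((Nat.factorial (k'-1)):ℝ) := by
              exact_mod_cast Nat.factorial_pos _
            have hEsplit : a ^ (((k':ℝ)+1-dd)*(t:ℝ))
                = a ^ ((k':ℝ)*((t:ℝ)-1)) * a^((t:ℝ)) * a^((k':ℝ)-dd') := by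
              rw [← Real.rpow_add ha0, ← Real.rpow_add ha0]
              congr 1
              rw [← hddt]
              ring
            have hfacteq : (Nat.factorial k' : ℝ) = (k':ℝ) * ((Nat.factorial (k'-1)):ℝ) := by
              have h9 := Nat.mul_factorial_pred (show k' ≠ 0 by omega)
              calc (Nat.factorial k' : ℝ) = ((k' * Nat.factorial (k'-1) : ℕ):ℝ) := by rw [h9]
              _ = (k':ℝ) * ((Nat.factorial (k'-1)):ℝ) := by push_cast; ring
            have hcoef : 2 / ((Nat.factorial k':ℝ)^(t-1:ℕ) * ((Nat.factorial (k'-1)):ℝ))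
                ≤ (2*(k':ℝ))^t / (Nat.factorial k':ℝ)^(t:ℕ) := by
              rw [div_le_div_iff₀ (by positivity) (by positivity)]
              have hp1 : (Nat.factorial k':ℝ)^(t:ℕ)
                  = (Nat.factorial k':ℝ)^(t-1:ℕ) * (Nat.factorial k':ℝ) := by
                rw [← pow_succ]
                congr 1
                omega
              have h2k : 2*(k':ℝ) ≤ (2*(k':ℝ))^(t:ℕ) := by
                apply le_self_pow₀ _ (by omega)
                have h10 : (1:ℝ) ≤ (k':ℝ) := by exact_mod_cast hk'
                linarith
              calc 2 * (Nat.factorial k':ℝ)^(t:ℕ)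
                  = (2*(k':ℝ)) * ((Nat.factorial k':ℝ)^(t-1:ℕ) * ((Nat.factorial (k'-1)):ℝ)) := by
                    rw [hp1, hfacteq]; ring
              _ ≤ (2*(k':ℝ))^t * ((Nat.factorial k':ℝ)^(t-1:ℕ) * ((Nat.factorial (k'-1)):ℝ)) :=
                    mul_le_mul_of_nonneg_right h2k (by positivity)
            calc ((n.choose k':ℕ):ℝ)^(t-1) * (a^(t:ℕ)) * bnd n t k'
                ≤ (a^(k':ℕ)/(Nat.factorial k':ℝ))^(t-1) * (a^(t:ℕ)) * bnd n t k' :=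
                  mul_le_mul_of_nonneg_right
                    (mul_le_mul_of_nonneg_right hNpow (by positivity))
                    (bnd_nonneg n t k' ht)
            _ = (2 / ((Nat.factorial k':ℝ)^(t-1:ℕ) * ((Nat.factorial (k'-1)):ℝ)))
                  * a ^ (((k':ℝ)+1-dd)*(t:ℝ)) := by
                  rw [hbnd', hak, div_pow, hat1, hat, hEsplit]
                  ring
            _ ≤ ((2*(k':ℝ))^t / (Nat.factorial k':ℝ)^(t:ℕ))
                  * a ^ (((k':ℝ)+1-dd)*(t:ℝ)) :=
                  mul_le_mul_of_nonneg_right hcoef (Real.rpow_nonneg ha0.le _)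
            _ = (2*(k':ℝ) * X / (Nat.factorial k' : ℝ))^t := by
                  simp only [div_pow, mul_pow]
                  rw [hXt]
                  ring
        have hMfin : M ≤ 2*(k':ℝ) * X / (Nat.factorial k' : ℝ) := by
          have h2' : M ^ t ≤ (2*(k':ℝ)*X/(Nat.factorial k':ℝ))^t := le_trans hMt hstar
          refine le_of_pow_le_pow_left₀ (by omega) ?_ h2'
          positivity
        have hfinal : ((k':ℝ)+1) * E.card ≤ ((k':ℝ)+1) * (2*X/(Nat.factorial k':ℝ)) := by
          have e1 : ((k':ℝ)+1) * E.card = M + ((t:ℝ)-1)*((n.choose k':ℕ):ℝ) := by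
            rw [hM]; ring
          have hXf : (0:ℝ) ≤ X / (Nat.factorial k':ℝ) := by positivity
          calc ((k':ℝ)+1) * E.card = M + ((t:ℝ)-1)*((n.choose k':ℕ):ℝ) := e1
          _ ≤ 2*(k':ℝ)*X/(Nat.factorial k':ℝ) + X/(Nat.factorial k':ℝ) :=
                add_le_add hMfin hstep
          _ = (2*(k':ℝ)+1) * (X/(Nat.factorial k':ℝ)) := by ring
          _ ≤ (2*(k':ℝ)+2) * (X/(Nat.factorial k':ℝ)) :=
                mul_le_mul_of_nonneg_right (by linarith) hXf
          _ = ((k':ℝ)+1) * (2*X/(Nat.factorial k':ℝ)) := by ring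
        have hk1pos : (0:ℝ) < (k':ℝ)+1 := by positivity
        exact le_of_mul_le_mul_left hfinal hk1pos

/-- The non-partite extremal number `ex(n, K^{(k)}_{t,…,t})`. -/
noncomputable def exNonpartite (n k t : ℕ) : ℕ :=
  sSup {c | ∃ E : Finset (Finset (Fin n)), (∀ e ∈ E, e.card = k) ∧
    ¬ HasNonpartiteCopy n k t E ∧ c = E.card}

lemma exNonpartite_spec (n k t : ℕ) (ht : 1 ≤ t) :
    ∃ E : Finset (Finset (Fin n)), (∀ e ∈ E, e.card = k) ∧ ¬ HasNonpartiteCopy n k t E ∧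
      exNonpartite n k t = E.card := by
  have hne : {c | ∃ E : Finset (Finset (Fin n)), (∀ e ∈ E, e.card = k) ∧
      ¬ HasNonpartiteCopy n k t E ∧ c = E.card}.Nonempty := by
    refine ⟨0, ∅, by simp, ?_, by simp⟩
    rintro ⟨v, -, hedge⟩
    exact absurd (hedge fun _ => ⟨0, ht⟩) (by simp)
  have hbdd : BddAbove {c | ∃ E : Finset (Finset (Fin n)), (∀ e ∈ E, e.card = k) ∧
      ¬ HasNonpartiteCopy n k t E ∧ c = E.card} := by
    refine ⟨Fintype.card (Finset (Fin n)), ?_⟩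
    rintro c ⟨E, -, -, rfl⟩
    exact Finset.card_le_univ E
  obtain ⟨E, h1, h2, h3⟩ := Nat.sSup_mem hne hbdd
  exact ⟨E, h1, h2, h3⟩

/-- Kővári–Sós–Turán / Erdős bound for non-partite extremal numbers. -/
theorem stmt6 (n k t : ℕ) (hk : 1 ≤ k) (ht : 1 ≤ t) :
    (2 ≤ k → (exNonpartite n k t : ℝ) ≤
      2 * (n : ℝ) ^ ((k : ℝ) - 1 / (t : ℝ) ^ (k - 1)) / (Nat.factorial (k - 1) : ℝ)) ∧
    (k = 1 → exNonpartite n k t ≤ t - 1) := by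
  obtain ⟨E, hU, hNC, hEq⟩ := exNonpartite_spec n k t ht
  constructor
  · intro hk2
    rw [hEq]
    have h := key n t ht k hk E hU hNC
    rwa [bnd, if_neg (by omega)] at h
  · intro hk1
    subst hk1
    rw [hEq]
    exact key_one n t ht E hU hNC
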